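/- Let Φ : T³ → T³ be a smooth diffeomorphism with det ∇Φ ≡ 1, and set A := (∇Φ)^{−1}, the pointwise inverse of the Jacobian matrix (∇Φ)_{ij} = ∂_j Φ_i. Let M : T³ → ℝ^{3×3} be a smooth symmetric matrix field which is divergence-free, i.e. Σ_l ∂_l M_{ml} = 0 for each m. Then for each i = 1,2,3, Σ_j ∂_j [ (A (M∘Φ) A^T)_{ij} ] = Σ_{j,l,m} A_{jl} (M_{ml}∘Φ) ∂_j A_{im}. -/

import Mathlib

noncomputable section

/-- The `j`-th standard basis vector of `ℝ³`. -/
def e3 (j : Fin 3) : Fin 3 → ℝ := Pi.single j 1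

/-- The Jacobian matrix `(∇Φ)_{ij} = ∂_j Φ_i`. -/
def jac (Φ : (Fin 3 → ℝ) → (Fin 3 → ℝ)) (x : Fin 3 → ℝ) : Matrix (Fin 3) (Fin 3) ℝ :=
  Matrix.of fun i j => fderiv ℝ Φ x (e3 j) i


private lemma eta3 (B : Matrix (Fin 3) (Fin 3) ℝ) :
    B = !![B 0 0, B 0 1, B 0 2; B 1 0, B 1 1, B 1 2; B 2 0, B 2 1, B 2 2] := by
  ext i j; fin_cases i <;> fin_cases j <;> rfl

private lemma adj_apply (B : Matrix (Fin 3) (Fin 3) ℝ) (p q : Fin 3) :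
    B.adjugate p q = B (q+1) (p+1) * B (q+2) (p+2) - B (q+1) (p+2) * B (q+2) (p+1) := by
  have h := congrFun (congrFun (congrArg Matrix.adjugate (eta3 B)) p) q
  rw [h, Matrix.adjugate_fin_three]
  fin_cases p <;> fin_cases q <;> simp <;> ring

private lemma vec_expand (v : Fin 3 → ℝ) : v = ∑ p, v p • e3 p := by
  have : ∀ p, v p • e3 p = Pi.single p (v p) := by
    intro p
    unfold e3
    ext q
    by_cases h : q = p <;> simp [h, Pi.single_apply]
  simp_rw [this]
  exact (Finset.univ_sum_single v).symm

private lemma jac_entry_smooth {Φ : (Fin 3 → ℝ) → (Fin 3 → ℝ)} (hΦ : ContDiff ℝ (⊤:ℕ∞) Φ)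
    (a b : Fin 3) : ContDiff ℝ (⊤:ℕ∞) (fun y => jac Φ y a b) := by
  have h1 : ContDiff ℝ (⊤:ℕ∞) (fderiv ℝ Φ) := hΦ.fderiv_right (by norm_num)
  have h2 : ContDiff ℝ (⊤:ℕ∞) (fun y => fderiv ℝ Φ y (e3 b)) := h1.clm_apply contDiff_const
  exact (ContinuousLinearMap.proj (R := ℝ) (φ := fun _ : Fin 3 => ℝ) a).contDiff.comp h2

private lemma jac_deriv_symm {Φ : (Fin 3 → ℝ) → (Fin 3 → ℝ)} (hΦ : ContDiff ℝ (⊤:ℕ∞) Φ)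
    (x : Fin 3 → ℝ) (a b c : Fin 3) :
    fderiv ℝ (fun y => jac Φ y a b) x (e3 c) = fderiv ℝ (fun y => jac Φ y a c) x (e3 b) := by
  have h1 : ContDiff ℝ (⊤:ℕ∞) (fderiv ℝ Φ) := hΦ.fderiv_right (by norm_num)
  set f' := fderiv ℝ Φ with hf'
  set f'' := fderiv ℝ f' x with hf''
  have hd : ∀ y, HasFDerivAt Φ (f' y) y := fun y =>
    (hΦ.differentiable (by norm_num)).differentiableAt.hasFDerivAt
  have h'' : HasFDerivAt f' f'' x :=
    (h1.differentiable (by norm_num)).differentiableAt.hasFDerivAt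
  have hsymm := second_derivative_symmetric hd h''
  have key : ∀ b' c' : Fin 3, fderiv ℝ (fun y => jac Φ y a b') x (e3 c') =
      (f'' (e3 c')) (e3 b') a := by
    intro b' c'
    set L : ((Fin 3 → ℝ) →L[ℝ] (Fin 3 → ℝ)) →L[ℝ] ℝ :=
      (ContinuousLinearMap.proj (R := ℝ) (φ := fun _ : Fin 3 => ℝ) a).comp
        (ContinuousLinearMap.apply ℝ (Fin 3 → ℝ) (e3 b')) with hL
    have hc : HasFDerivAt (fun y => L (f' y)) (L.comp f'') x := (L.hasFDerivAt.comp x h'')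
    have he : (fun y => jac Φ y a b') = fun y => L (f' y) := rfl
    rw [he, hc.fderiv]
    rfl
  rw [key b c, key c b, hsymm]

private lemma deriv_cross {f g h k : (Fin 3 → ℝ) → ℝ} {x v : Fin 3 → ℝ}
    (hf : DifferentiableAt ℝ f x) (hg : DifferentiableAt ℝ g x)
    (hh : DifferentiableAt ℝ h x) (hk : DifferentiableAt ℝ k x) :
    fderiv ℝ (fun y => f y * g y - h y * k y) x v =
      f x * fderiv ℝ g x v + g x * fderiv ℝ f x v
        - (h x * fderiv ℝ k x v + k x * fderiv ℝ h x v) := by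
  rw [fderiv_fun_sub (hf.fun_mul hg) (hh.fun_mul hk), fderiv_fun_mul hf hg, fderiv_fun_mul hh hk]
  simp

private lemma deriv_mul3 {f g h : (Fin 3 → ℝ) → ℝ} {x v : Fin 3 → ℝ}
    (hf : DifferentiableAt ℝ f x) (hg : DifferentiableAt ℝ g x)
    (hh : DifferentiableAt ℝ h x) :
    fderiv ℝ (fun y => f y * g y * h y) x v =
      fderiv ℝ f x v * g x * h x + f x * fderiv ℝ g x v * h x
        + f x * g x * fderiv ℝ h x v := by
  rw [fderiv_fun_mul (hf.fun_mul hg) hh, fderiv_fun_mul hf hg]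
  simp
  ring

private lemma piola {Φ : (Fin 3 → ℝ) → (Fin 3 → ℝ)} (hΦ : ContDiff ℝ (⊤:ℕ∞) Φ)
    (x : Fin 3 → ℝ) (l : Fin 3) :
    ∑ j, fderiv ℝ (fun y => (jac Φ y).adjugate j l) x (e3 j) = 0 := by
  have hd : ∀ a b, DifferentiableAt ℝ (fun y => jac Φ y a b) x := fun a b =>
    ((jac_entry_smooth hΦ a b).differentiable (by norm_num)).differentiableAt
  have hrw : ∀ j : Fin 3, (fun y => (jac Φ y).adjugate j l) = fun y =>
      jac Φ y (l+1) (j+1) * jac Φ y (l+2) (j+2) - jac Φ y (l+1) (j+2) * jac Φ y (l+2) (j+1) :=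
    fun j => funext fun y => adj_apply (jac Φ y) j l
  rw [Fin.sum_univ_three, hrw 0, hrw 1, hrw 2]
  rw [deriv_cross (hd _ _) (hd _ _) (hd _ _) (hd _ _),
      deriv_cross (hd _ _) (hd _ _) (hd _ _) (hd _ _),
      deriv_cross (hd _ _) (hd _ _) (hd _ _) (hd _ _)]
  simp only [show (0:Fin 3)+1 = 1 from rfl, show (0:Fin 3)+2 = 2 from rfl,
    show (1:Fin 3)+1 = 2 from rfl, show (1:Fin 3)+2 = 0 from rfl,
    show (2:Fin 3)+1 = 0 from rfl, show (2:Fin 3)+2 = 1 from rfl]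
  rw [jac_deriv_symm hΦ x (l+1) 1 0, jac_deriv_symm hΦ x (l+2) 2 0,
      jac_deriv_symm hΦ x (l+1) 2 0, jac_deriv_symm hΦ x (l+2) 1 0,
      jac_deriv_symm hΦ x (l+1) 2 1, jac_deriv_symm hΦ x (l+2) 2 1]
  ring

private lemma comp_deriv {Φ : (Fin 3 → ℝ) → (Fin 3 → ℝ)} {g : (Fin 3 → ℝ) → ℝ}
    (hΦ : ContDiff ℝ (⊤:ℕ∞) Φ) (hg : ContDiff ℝ (⊤:ℕ∞) g) (x : Fin 3 → ℝ) (j : Fin 3) :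
    fderiv ℝ (fun y => g (Φ y)) x (e3 j)
      = ∑ p, jac Φ x p j * fderiv ℝ g (Φ x) (e3 p) := by
  have h1 : fderiv ℝ (g ∘ Φ) x = (fderiv ℝ g (Φ x)).comp (fderiv ℝ Φ x) :=
    fderiv_comp x (hg.differentiable (by norm_num)).differentiableAt
      (hΦ.differentiable (by norm_num)).differentiableAt
  have h2 : fderiv ℝ (fun y => g (Φ y)) x (e3 j) = fderiv ℝ g (Φ x) (fderiv ℝ Φ x (e3 j)) := by
    rw [show (fun y => g (Φ y)) = g ∘ Φ from rfl, h1]; rfl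
  rw [h2, vec_expand (fderiv ℝ Φ x (e3 j)), map_sum]
  refine Finset.sum_congr rfl fun p _ => ?_
  rw [map_smul]
  rfl

/-- For a volume-preserving diffeomorphism `Φ` of `𝕋³` with `A = (∇Φ)⁻¹` and a smooth symmetric
divergence-free matrix field `M`, the divergence `Σ_j ∂_j[(A (M∘Φ) Aᵀ)_{ij}]` equals
`Σ_{j,l,m} A_{jl} (M_{ml}∘Φ) ∂_j A_{im}`. -/
theorem flowed_stress_divergence
    (Φ : (Fin 3 → ℝ) → (Fin 3 → ℝ)) (M : (Fin 3 → ℝ) → Matrix (Fin 3) (Fin 3) ℝ)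
    (hΦ : ContDiff ℝ (⊤ : ℕ∞) Φ)
    (hM : ∀ i j, ContDiff ℝ (⊤ : ℕ∞) (fun x => M x i j))
    (hΦbij : Function.Bijective Φ)
    (hΦper : ∀ (x : Fin 3 → ℝ) (j : Fin 3),
      Φ (x + (2 * Real.pi) • e3 j) = Φ x + (2 * Real.pi) • e3 j)
    (hMper : ∀ (x : Fin 3 → ℝ) (j : Fin 3) (i i' : Fin 3),
      M (x + (2 * Real.pi) • e3 j) i i' = M x i i')
    (hdet : ∀ x, (jac Φ x).det = 1)
    (hsym : ∀ x i j, M x i j = M x j i)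
    (hdiv : ∀ (x : Fin 3 → ℝ) (m : Fin 3),
      ∑ l, fderiv ℝ (fun y => M y m l) x (e3 l) = 0) :
    ∀ (x : Fin 3 → ℝ) (i : Fin 3),
      ∑ j, fderiv ℝ
          (fun y => ((jac Φ y)⁻¹ * M (Φ y) * ((jac Φ y)⁻¹).transpose) i j) x (e3 j)
        = ∑ j, ∑ l, ∑ m,
            (jac Φ x)⁻¹ j l * M (Φ x) m l *
              fderiv ℝ (fun y => (jac Φ y)⁻¹ i m) x (e3 j) := by
  intro x i
  have hAeq : ∀ y, (jac Φ y)⁻¹ = (jac Φ y).adjugate := fun y => by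
    rw [Matrix.inv_def, hdet y, Ring.inverse_one, one_smul]
  simp only [hAeq]
  have hJ : ∀ a b, ContDiff ℝ (⊤:ℕ∞) (fun y => jac Φ y a b) := jac_entry_smooth hΦ
  have hA : ∀ a b, ContDiff ℝ (⊤:ℕ∞) (fun y => (jac Φ y).adjugate a b) := by
    intro a b
    have he : (fun y => (jac Φ y).adjugate a b) = fun y =>
        jac Φ y (b+1) (a+1) * jac Φ y (b+2) (a+2) - jac Φ y (b+1) (a+2) * jac Φ y (b+2) (a+1) :=
      funext fun y => adj_apply (jac Φ y) a b
    rw [he]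
    exact ((hJ _ _).mul (hJ _ _)).sub ((hJ _ _).mul (hJ _ _))
  have hdA : ∀ a b, DifferentiableAt ℝ (fun y => (jac Φ y).adjugate a b) x := fun a b =>
    ((hA a b).differentiable (by norm_num)).differentiableAt
  have hdN : ∀ m l, DifferentiableAt ℝ (fun y => M (Φ y) m l) x := fun m l =>
    (((hM m l).comp hΦ).differentiable (by norm_num)).differentiableAt
  have hdnrw : ∀ m k j, fderiv ℝ (fun y => M (Φ y) m k) x (e3 j)
      = ∑ p, jac Φ x p j * fderiv ℝ (fun z => M z m k) (Φ x) (e3 p) :=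
    fun m k j => comp_deriv hΦ (hM m k) x j
  have hJA : ∀ p k, (∑ j, jac Φ x p j * (jac Φ x).adjugate j k) = if p = k then 1 else 0 := by
    intro p k
    have h2 := congrFun (congrFun (Matrix.mul_adjugate (jac Φ x)) p) k
    rw [hdet, one_smul] at h2
    rw [Matrix.mul_apply] at h2
    rw [h2, Matrix.one_apply]
  have hterm : ∀ j : Fin 3,
      fderiv ℝ (fun y => ((jac Φ y).adjugate * M (Φ y) * ((jac Φ y).adjugate).transpose) i j) x (e3 j)
      = ∑ k, ∑ m,
        (fderiv ℝ (fun y => (jac Φ y).adjugate i m) x (e3 j) * M (Φ x) m k * (jac Φ x).adjugate j k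
         + (jac Φ x).adjugate i m * fderiv ℝ (fun y => M (Φ y) m k) x (e3 j) * (jac Φ x).adjugate j k
         + (jac Φ x).adjugate i m * M (Φ x) m k * fderiv ℝ (fun y => (jac Φ y).adjugate j k) x (e3 j)) := by
    intro j
    have he : (fun y => ((jac Φ y).adjugate * M (Φ y) * ((jac Φ y).adjugate).transpose) i j)
        = fun y => ∑ k, ∑ m, (jac Φ y).adjugate i m * M (Φ y) m k * (jac Φ y).adjugate j k := by
      funext y
      simp [Matrix.mul_apply, Matrix.transpose_apply, Finset.sum_mul]
    rw [he]
    rw [fderiv_fun_sum (fun k _ => DifferentiableAt.fun_sum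
      (fun m _ => ((hdA i m).fun_mul (hdN m k)).fun_mul (hdA j k)))]
    rw [ContinuousLinearMap.sum_apply]
    refine Finset.sum_congr rfl fun k _ => ?_
    rw [fderiv_fun_sum (fun m _ => ((hdA i m).fun_mul (hdN m k)).fun_mul (hdA j k)),
      ContinuousLinearMap.sum_apply]
    exact Finset.sum_congr rfl fun m _ => deriv_mul3 (hdA i m) (hdN m k) (hdA j k)
  rw [Finset.sum_congr rfl fun j _ => hterm j]
  simp only [Finset.sum_add_distrib]
  have hS2 : (∑ j, ∑ k, ∑ m, (jac Φ x).adjugate i m *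
      fderiv ℝ (fun y => M (Φ y) m k) x (e3 j) * (jac Φ x).adjugate j k) = 0 := by
    have key2 : ∀ k m, (∑ j, (jac Φ x).adjugate i m *
        fderiv ℝ (fun y => M (Φ y) m k) x (e3 j) * (jac Φ x).adjugate j k)
        = (jac Φ x).adjugate i m * fderiv ℝ (fun z => M z m k) (Φ x) (e3 k) := by
      intro k m
      calc (∑ j, (jac Φ x).adjugate i m *
            fderiv ℝ (fun y => M (Φ y) m k) x (e3 j) * (jac Φ x).adjugate j k)
          = ∑ j, ∑ p, ((jac Φ x).adjugate i m * fderiv ℝ (fun z => M z m k) (Φ x) (e3 p))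
              * (jac Φ x p j * (jac Φ x).adjugate j k) := by
            refine Finset.sum_congr rfl fun j _ => ?_
            rw [hdnrw m k j, Finset.mul_sum, Finset.sum_mul]
            exact Finset.sum_congr rfl fun p _ => by ring
        _ = ∑ p, ∑ j, ((jac Φ x).adjugate i m * fderiv ℝ (fun z => M z m k) (Φ x) (e3 p))
              * (jac Φ x p j * (jac Φ x).adjugate j k) := Finset.sum_comm
        _ = ∑ p, ((jac Φ x).adjugate i m * fderiv ℝ (fun z => M z m k) (Φ x) (e3 p))
              * ∑ j, (jac Φ x p j * (jac Φ x).adjugate j k) := by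
            exact Finset.sum_congr rfl fun p _ => (Finset.mul_sum _ _ _).symm
        _ = ∑ p, ((jac Φ x).adjugate i m * fderiv ℝ (fun z => M z m k) (Φ x) (e3 p))
              * (if p = k then 1 else 0) := by
            exact Finset.sum_congr rfl fun p _ => by rw [hJA p k]
        _ = (jac Φ x).adjugate i m * fderiv ℝ (fun z => M z m k) (Φ x) (e3 k) := by
            simp [mul_ite, mul_one, mul_zero]
    rw [Finset.sum_comm]
    calc (∑ k, ∑ j, ∑ m, (jac Φ x).adjugate i m *
          fderiv ℝ (fun y => M (Φ y) m k) x (e3 j) * (jac Φ x).adjugate j k)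
        = ∑ k, ∑ m, ∑ j, (jac Φ x).adjugate i m *
          fderiv ℝ (fun y => M (Φ y) m k) x (e3 j) * (jac Φ x).adjugate j k := by
          exact Finset.sum_congr rfl fun k _ => Finset.sum_comm
      _ = ∑ k, ∑ m, (jac Φ x).adjugate i m * fderiv ℝ (fun z => M z m k) (Φ x) (e3 k) := by
          exact Finset.sum_congr rfl fun k _ => Finset.sum_congr rfl fun m _ => key2 k m
      _ = ∑ m, ∑ k, (jac Φ x).adjugate i m * fderiv ℝ (fun z => M z m k) (Φ x) (e3 k) :=
          Finset.sum_comm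
      _ = ∑ m : Fin 3, (jac Φ x).adjugate i m *
            ∑ k, fderiv ℝ (fun z => M z m k) (Φ x) (e3 k) := by
          exact Finset.sum_congr rfl fun m _ => (Finset.mul_sum _ _ _).symm
      _ = 0 := by
          have hz : ∀ m : Fin 3, (∑ k, fderiv ℝ (fun z => M z m k) (Φ x) (e3 k)) = (0:ℝ) :=
            fun m => hdiv (Φ x) m
          simp [hz]
  rw [hS2, add_zero]
  have hS3 : (∑ j, ∑ k, ∑ m, (jac Φ x).adjugate i m * M (Φ x) m k *
      fderiv ℝ (fun y => (jac Φ y).adjugate j k) x (e3 j)) = 0 := by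
    rw [Finset.sum_comm]
    calc (∑ k, ∑ j, ∑ m, (jac Φ x).adjugate i m * M (Φ x) m k *
          fderiv ℝ (fun y => (jac Φ y).adjugate j k) x (e3 j))
        = ∑ k, ∑ j, (∑ m, (jac Φ x).adjugate i m * M (Φ x) m k) *
          fderiv ℝ (fun y => (jac Φ y).adjugate j k) x (e3 j) := by
          exact Finset.sum_congr rfl fun k _ => Finset.sum_congr rfl fun j _ =>
            (Finset.sum_mul _ _ _).symm
      _ = ∑ k, (∑ m, (jac Φ x).adjugate i m * M (Φ x) m k) *
          ∑ j, fderiv ℝ (fun y => (jac Φ y).adjugate j k) x (e3 j) := by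
          exact Finset.sum_congr rfl fun k _ => (Finset.mul_sum _ _ _).symm
      _ = 0 := by
          have hp : ∀ k : Fin 3, (∑ j, fderiv ℝ (fun y => (jac Φ y).adjugate j k) x (e3 j)) = 0 :=
            fun k => piola hΦ x k
          simp [hp]
  rw [hS3, add_zero]
  refine Finset.sum_congr rfl fun j _ => ?_
  refine Finset.sum_congr rfl fun k _ => ?_
  refine Finset.sum_congr rfl fun m _ => ?_
  ring
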